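/- Let A be a real antisymmetric n × n matrix and V a complex symmetric n × n matrix; set F = [[−A, I], [A² − V/2, −A]] ∈ M_{2n}(ℂ) and T(λ) = λ²I + 2λA + (1/2)V. Let λ₀ be an eigenvalue of F and let ε > 0 be such that λ₀ is the only eigenvalue of F in the closed disc {λ : |λ − λ₀| ≤ ε}. Then tr( (2πi)^{−1} ∮_{|λ−λ₀|=ε} (λ·I_{2n} − F)^{−1} dλ ) = tr( (2πi)^{−1} ∮_{|λ−λ₀|=ε} T(λ)^{−1}·T'(λ) dλ ), i.e., the algebraic multiplicity of λ₀ as an eigenvalue of F equals its multiplicity as an eigenvalue of the quadratic matrix pencil T. -/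

import Mathlib

open Matrix Real

attribute [local instance] Matrix.normedAddCommGroup Matrix.normedSpace


lemma trace_fromBlocks'' {n : ℕ} (a b c d : Matrix (Fin n) (Fin n) ℂ) :
    Matrix.trace (Matrix.fromBlocks a b c d) = Matrix.trace a + Matrix.trace d := by
  simp [Matrix.trace, Fintype.sum_sum_type, Matrix.fromBlocks, Matrix.diag]

lemma pencil_key {n : ℕ} (Ac V : Matrix (Fin n) (Fin n) ℂ) (lam : ℂ)
    (h : IsUnit (lam • (1 : Matrix (Fin n ⊕ Fin n) (Fin n ⊕ Fin n) ℂ)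
        - Matrix.fromBlocks (-Ac) 1 (Ac * Ac - (1/2 : ℂ) • V) (-Ac)).det) :
    IsUnit (lam ^ 2 • (1 : Matrix (Fin n) (Fin n) ℂ) + (2 * lam) • Ac + (1/2 : ℂ) • V).det ∧
    Matrix.trace (lam • (1 : Matrix (Fin n ⊕ Fin n) (Fin n ⊕ Fin n) ℂ)
        - Matrix.fromBlocks (-Ac) 1 (Ac * Ac - (1/2 : ℂ) • V) (-Ac))⁻¹
      = Matrix.trace ((lam ^ 2 • (1 : Matrix (Fin n) (Fin n) ℂ) + (2 * lam) • Ac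
          + (1/2 : ℂ) • V)⁻¹ * ((2 * lam) • (1 : Matrix (Fin n) (Fin n) ℂ) + (2 : ℂ) • Ac)) := by
  set a : Matrix (Fin n) (Fin n) ℂ := lam • 1 + Ac with ha
  set c : Matrix (Fin n) (Fin n) ℂ := Ac * Ac - (1/2 : ℂ) • V with hc
  set Tm : Matrix (Fin n) (Fin n) ℂ := lam ^ 2 • 1 + (2 * lam) • Ac + (1/2 : ℂ) • V with hTm
  set M : Matrix (Fin n ⊕ Fin n) (Fin n ⊕ Fin n) ℂ :=
    lam • 1 - Matrix.fromBlocks (-Ac) 1 c (-Ac) with hM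
  have hMb : M = Matrix.fromBlocks a (-1) (-c) a := by
    rw [hM, ← Matrix.fromBlocks_one, Matrix.fromBlocks_smul, sub_eq_add_neg,
      Matrix.fromBlocks_neg, Matrix.fromBlocks_add]
    congr 1 <;> simp [ha]
  have hTac : a * a - c = Tm := by
    rw [ha, hc, hTm]
    simp only [add_mul, mul_add, smul_mul_assoc, mul_smul_comm, one_mul, mul_one]
    module
  have h' : IsUnit M.det := h
  set N := M⁻¹ with hN
  have h1 : M * N = 1 := Matrix.mul_nonsing_inv _ h'
  have h2 : N * M = 1 := Matrix.nonsing_inv_mul _ h'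
  set x := N.toBlocks₁₁ with hx
  set y := N.toBlocks₁₂ with hy
  set z := N.toBlocks₂₁ with hz
  set w := N.toBlocks₂₂ with hw
  have hNb : N = Matrix.fromBlocks x y z w := (Matrix.fromBlocks_toBlocks N).symm
  rw [hMb, hNb, Matrix.fromBlocks_multiply, ← Matrix.fromBlocks_one] at h1 h2
  rw [Matrix.fromBlocks_inj] at h1 h2
  obtain ⟨e11, e12, e21, e22⟩ := h1
  obtain ⟨f11, f12, f21, f22⟩ := h2
  -- w = a * y
  have hwy : w = a * y := by
    have := e12
    rwa [neg_one_mul, add_neg_eq_zero, eq_comm] at this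
  -- x = y * a
  have hxy : x = y * a := by
    have := f12
    rwa [mul_neg_one, neg_add_eq_zero] at this
  -- Tm * y = 1
  have hTy : Tm * y = 1 := by
    rw [← hTac, sub_mul, mul_assoc, ← hwy]
    rw [sub_eq_add_neg, ← neg_mul, add_comm]
    exact e22
  have hyT : y * Tm = 1 := by
    rw [← hTac, mul_sub, ← mul_assoc, ← hxy, sub_eq_add_neg, ← mul_neg]
    exact f11
  have hTunit : IsUnit Tm.det := Matrix.isUnit_det_of_right_inverse hTy
  have hTinv : Tm⁻¹ = y := Matrix.inv_eq_right_inv hTy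
  refine ⟨hTunit, ?_⟩
  have h2a : (2 * lam) • (1 : Matrix (Fin n) (Fin n) ℂ) + (2 : ℂ) • Ac = (2 : ℂ) • a := by
    rw [ha]; module
  rw [hTinv, h2a, hNb, trace_fromBlocks'', hxy, hwy, Matrix.trace_mul_comm a y,
    Matrix.mul_smul, Matrix.trace_smul, two_smul]


/-- if `λ₀` is the only eigenvalue of the Hamilton matrix
`F = [[−A, I], [A² − V/2, −A]]` in the closed disc `|λ − λ₀| ≤ ε`, then the algebraic
multiplicity of `λ₀` as an eigenvalue of `F`, i.e. the trace of the Riesz projection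
`(2πi)⁻¹ ∮ (λ − F)⁻¹ dλ`, equals its multiplicity as an eigenvalue of the pencil
`T(λ) = λ² + 2λA + V/2`, i.e. the trace of `(2πi)⁻¹ ∮ T(λ)⁻¹ T'(λ) dλ`. -/
theorem trace_riesz_projection_eq_pencil_multiplicity
    (n : ℕ) (A : Matrix (Fin n) (Fin n) ℝ) (hA : Aᵀ = -A)
    (V : Matrix (Fin n) (Fin n) ℂ) (hV : Vᵀ = V)
    (Ac : Matrix (Fin n) (Fin n) ℂ) (hAc : Ac = A.map Complex.ofReal)
    (F : Matrix (Fin n ⊕ Fin n) (Fin n ⊕ Fin n) ℂ)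
    (hF : F = Matrix.fromBlocks (-Ac) 1 (Ac * Ac - (1/2 : ℂ) • V) (-Ac))
    (T : ℂ → Matrix (Fin n) (Fin n) ℂ)
    (hT : ∀ lam : ℂ, T lam = lam ^ 2 • 1 + (2 * lam) • Ac + (1/2 : ℂ) • V)
    (lam₀ : ℂ)
    (hlam₀ : (lam₀ • (1 : Matrix (Fin n ⊕ Fin n) (Fin n ⊕ Fin n) ℂ) - F).det = 0)
    (ε : ℝ) (hε : 0 < ε)
    (honly : ∀ lam : ℂ, ‖lam - lam₀‖ ≤ ε →
      (lam • (1 : Matrix (Fin n ⊕ Fin n) (Fin n ⊕ Fin n) ℂ) - F).det = 0 →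
      lam = lam₀) :
    Matrix.trace ((2 * (π : ℂ) * Complex.I)⁻¹ •
        (∮ lam in C(lam₀, ε),
          (lam • (1 : Matrix (Fin n ⊕ Fin n) (Fin n ⊕ Fin n) ℂ) - F)⁻¹))
      = Matrix.trace ((2 * (π : ℂ) * Complex.I)⁻¹ •
        (∮ lam in C(lam₀, ε),
          (T lam)⁻¹ * ((2 * lam) • (1 : Matrix (Fin n) (Fin n) ℂ) + (2 : ℂ) • Ac))) := by
  subst hF
  set F := Matrix.fromBlocks (-Ac) 1 (Ac * Ac - (1/2 : ℂ) • V) (-Ac) with hF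
  have hdet : ∀ lam : ℂ, ‖lam - lam₀‖ = ε →
      IsUnit (lam • (1 : Matrix (Fin n ⊕ Fin n) (Fin n ⊕ Fin n) ℂ) - F).det := by
    intro lam hl
    rw [isUnit_iff_ne_zero]
    intro h0
    have h1 := honly lam (le_of_eq hl) h0
    rw [h1, sub_self] at hl
    simp only [norm_zero] at hl
    exact absurd hl.symm (ne_of_gt hε)
  have habs : ∀ θ : ℝ, ‖circleMap lam₀ ε θ - lam₀‖ = ε := by
    intro θ
    rw [circleMap_sub_center, norm_circleMap_zero, abs_of_pos hε]
  have hkey : ∀ θ : ℝ,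
      (IsUnit (T (circleMap lam₀ ε θ)).det ∧
        Matrix.trace (circleMap lam₀ ε θ • (1 : Matrix (Fin n ⊕ Fin n) (Fin n ⊕ Fin n) ℂ) - F)⁻¹
          = Matrix.trace ((T (circleMap lam₀ ε θ))⁻¹ *
              ((2 * circleMap lam₀ ε θ) • (1 : Matrix (Fin n) (Fin n) ℂ) + (2 : ℂ) • Ac))) := by
    intro θ
    have hk := pencil_key Ac V (circleMap lam₀ ε θ)
      (by rw [hF] at hdet; exact hdet _ (habs θ))
    rw [hT, hF]
    exact hk
  have hcm : Continuous (circleMap lam₀ ε) := continuous_circleMap _ _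
  have hMc : Continuous fun θ : ℝ =>
      circleMap lam₀ ε θ • (1 : Matrix (Fin n ⊕ Fin n) (Fin n ⊕ Fin n) ℂ) - F :=
    (hcm.smul continuous_const).sub continuous_const
  have hdetne : ∀ θ : ℝ,
      (circleMap lam₀ ε θ • (1 : Matrix (Fin n ⊕ Fin n) (Fin n ⊕ Fin n) ℂ) - F).det ≠ 0 :=
    fun θ => (hdet _ (habs θ)).ne_zero
  have hinv : Continuous fun θ : ℝ =>
      (circleMap lam₀ ε θ • (1 : Matrix (Fin n ⊕ Fin n) (Fin n ⊕ Fin n) ℂ) - F)⁻¹ := by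
    have heq : (fun θ : ℝ =>
        (circleMap lam₀ ε θ • (1 : Matrix (Fin n ⊕ Fin n) (Fin n ⊕ Fin n) ℂ) - F)⁻¹)
        = fun θ : ℝ =>
          ((circleMap lam₀ ε θ • (1 : Matrix (Fin n ⊕ Fin n) (Fin n ⊕ Fin n) ℂ) - F).det)⁻¹ •
            (circleMap lam₀ ε θ • (1 : Matrix (Fin n ⊕ Fin n) (Fin n ⊕ Fin n) ℂ) - F).adjugate := by
      funext θ; rw [Matrix.inv_def, Ring.inverse_eq_inv]
    rw [heq]
    exact (hMc.matrix_det.inv₀ hdetne).smul hMc.matrix_adjugate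
  have hTc : Continuous fun θ : ℝ => T (circleMap lam₀ ε θ) := by
    simp only [hT]
    exact (((hcm.pow 2).smul continuous_const).add
      ((continuous_const.mul hcm).smul continuous_const)).add continuous_const
  have hTdetne : ∀ θ : ℝ, (T (circleMap lam₀ ε θ)).det ≠ 0 := fun θ => (hkey θ).1.ne_zero
  have hTinv : Continuous fun θ : ℝ => (T (circleMap lam₀ ε θ))⁻¹ := by
    have heq : (fun θ : ℝ => (T (circleMap lam₀ ε θ))⁻¹)
        = fun θ : ℝ => ((T (circleMap lam₀ ε θ)).det)⁻¹ • (T (circleMap lam₀ ε θ)).adjugate := by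
      funext θ; rw [Matrix.inv_def, Ring.inverse_eq_inv]
    rw [heq]
    exact (hTc.matrix_det.inv₀ hTdetne).smul hTc.matrix_adjugate
  have hgc : Continuous fun θ : ℝ => (T (circleMap lam₀ ε θ))⁻¹ *
      ((2 * circleMap lam₀ ε θ) • (1 : Matrix (Fin n) (Fin n) ℂ) + (2 : ℂ) • Ac) :=
    hTinv.matrix_mul (((continuous_const.mul hcm).smul continuous_const).add continuous_const)
  have hdc : Continuous fun θ : ℝ => deriv (circleMap lam₀ ε) θ := by
    simp only [deriv_circleMap]
    exact (continuous_circleMap 0 ε).mul continuous_const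
  have hInt1 :=
    Continuous.intervalIntegrable (μ := MeasureTheory.volume) (u := fun θ : ℝ => deriv (circleMap lam₀ ε) θ •
      (circleMap lam₀ ε θ • (1 : Matrix (Fin n ⊕ Fin n) (Fin n ⊕ Fin n) ℂ) - F)⁻¹) (hdc.smul hinv) 0 (2 * π)
  have hInt2 :=
    Continuous.intervalIntegrable (μ := MeasureTheory.volume) (u := fun θ : ℝ => deriv (circleMap lam₀ ε) θ •
      ((T (circleMap lam₀ ε θ))⁻¹ *
        ((2 * circleMap lam₀ ε θ) • (1 : Matrix (Fin n) (Fin n) ℂ) + (2 : ℂ) • Ac))) (hdc.smul hgc) 0 (2 * π)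
  let L1 : Matrix (Fin n ⊕ Fin n) (Fin n ⊕ Fin n) ℂ →L[ℂ] ℂ :=
    LinearMap.toContinuousLinearMap (Matrix.traceLinearMap (Fin n ⊕ Fin n) ℂ ℂ)
  let L2 : Matrix (Fin n) (Fin n) ℂ →L[ℂ] ℂ :=
    LinearMap.toContinuousLinearMap (Matrix.traceLinearMap (Fin n) ℂ ℂ)
  have hL1 : ∀ X, Matrix.trace X = L1 X := fun X => rfl
  have hL2 : ∀ X, Matrix.trace X = L2 X := fun X => rfl
  rw [Matrix.trace_smul, Matrix.trace_smul]
  congr 1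
  rw [hL1, hL2]
  unfold circleIntegral
  beta_reduce
  erw [← L1.intervalIntegral_comp_comm hInt1, ← L2.intervalIntegral_comp_comm hInt2]
  refine intervalIntegral.integral_congr fun θ _ => ?_
  change Matrix.trace (deriv (circleMap lam₀ ε) θ •
      (_ : Matrix (Fin n ⊕ Fin n) (Fin n ⊕ Fin n) ℂ)) =
    Matrix.trace (deriv (circleMap lam₀ ε) θ • (_ : Matrix (Fin n) (Fin n) ℂ))
  rw [Matrix.trace_smul, Matrix.trace_smul, (hkey θ).2]
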